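/- arXiv:2603.18550 — 5 statements merged into one kernel-verified Lean document; each statement's English description precedes it below -/
import Mathlib

section
/- Let 2 ≤ n ≤ k, 0 ≤ i ≤ k-1, q > 0, and 0 ≤ r < 2^q be integers. Set β_n(j) = Σ_{t=0}^{n-1} C(j-1,t) and d_i = 2^q·β_n(k-i) + r·β_n(i+1). Then d_0 - d_i ≥ i. -/
private lemma vand (a b m : ℕ) (hm : 1 ≤ m) :
    a.choose m + b.choose m ≤ (a + b).choose m := by
  rw [Nat.add_choose_eq]
  have hne : ((m, 0) : ℕ × ℕ) ≠ (0, m) := by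
    intro h
    exact absurd (congrArg Prod.fst h) (by simpa using Nat.one_le_iff_ne_zero.mp hm)
  have hsub : ({(m, 0), (0, m)} : Finset (ℕ × ℕ)) ⊆ Finset.HasAntidiagonal.antidiagonal m := by
    intro p hp
    simp only [Finset.mem_insert, Finset.mem_singleton] at hp
    rcases hp with h | h <;> simp [h]
  calc a.choose m + b.choose m
      = ∑ p ∈ ({(m, 0), (0, m)} : Finset (ℕ × ℕ)), a.choose p.1 * b.choose p.2 := by
        rw [Finset.sum_pair hne]; simp
    _ ≤ ∑ p ∈ Finset.HasAntidiagonal.antidiagonal m, a.choose p.1 * b.choose p.2 :=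
        Finset.sum_le_sum_of_subset hsub

private lemma sumA (a b n : ℕ) :
    (∑ t ∈ Finset.range n, a.choose t) + (∑ t ∈ Finset.range n, b.choose t)
      ≤ 1 + ∑ t ∈ Finset.range n, (a + b).choose t := by
  induction n with
  | zero => simp
  | succ m ih =>
    rw [Finset.sum_range_succ, Finset.sum_range_succ, Finset.sum_range_succ]
    rcases Nat.eq_zero_or_pos m with hm | hm
    · subst hm; simp
    · have := vand a b m hm
      omega

private lemma sumC (c i n : ℕ) (hn : 2 ≤ n) :
    i + ∑ t ∈ Finset.range n, c.choose t ≤ ∑ t ∈ Finset.range n, (c + i).choose t := by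
  have h1 : (1 : ℕ) ∈ Finset.range n := Finset.mem_range.mpr (by omega)
  have key : ∑ t ∈ Finset.range n, (c.choose t + if t = 1 then i else 0)
      ≤ ∑ t ∈ Finset.range n, (c + i).choose t := by
    refine Finset.sum_le_sum fun t _ => ?_
    rcases eq_or_ne t 1 with rfl | ht
    · simp [Nat.choose_one_right]
    · simpa [ht] using Nat.choose_le_choose t (Nat.le_add_right c i)
  rw [Finset.sum_add_distrib, Finset.sum_ite_eq' (Finset.range n) 1 (fun _ => i)] at key
  simp only [h1, if_true] at key
  omega

private lemma sumZero (n : ℕ) (hn : 1 ≤ n) :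
    ∑ t ∈ Finset.range n, Nat.choose 0 t = 1 := by
  induction n with
  | zero => omega
  | succ m ih =>
    rw [Finset.sum_range_succ]
    rcases Nat.eq_zero_or_pos m with hm | hm
    · subst hm; simp
    · rw [ih hm]
      rcases m with _ | m
      · omega
      · simp

theorem d_zero_sub_d_i_ge_i (n k i q r : ℕ)
    (hn : 2 ≤ n) (hnk : n ≤ k) (hi : i ≤ k - 1) (hq : 0 < q) (hr : r < 2 ^ q) :
    i ≤ (2 ^ q * ∑ t ∈ Finset.range n, Nat.choose (k - 1) t
          + r * ∑ t ∈ Finset.range n, Nat.choose 0 t)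
        - (2 ^ q * ∑ t ∈ Finset.range n, Nat.choose (k - i - 1) t
          + r * ∑ t ∈ Finset.range n, Nat.choose i t) := by
  rw [sumZero n (by omega)]
  set A := ∑ t ∈ Finset.range n, Nat.choose (k - 1) t with hA
  set B := ∑ t ∈ Finset.range n, Nat.choose (k - i - 1) t with hB
  set S := ∑ t ∈ Finset.range n, Nat.choose i t with hS
  have hsplit : k - i - 1 + i = k - 1 := by omega
  have hBA : i + B ≤ A := by
    rw [hA, hB, ← hsplit]
    exact sumC (k - i - 1) i n hn
  have hAS : B + S ≤ 1 + A := by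
    rw [hA, hB, hS, ← hsplit]
    exact sumA (k - i - 1) i n
  -- arithmetic: show i + (2^q * B + r * S) ≤ 2^q * A + r * 1
  have h2q : 0 < 2 ^ q := Nat.pow_pos (n := q) (by omega)
  apply Nat.le_sub_of_add_le
  have hD : i + B ≤ A := hBA
  nlinarith [Nat.sub_add_cancel (le_trans (Nat.le_add_left B i) hBA),
    mul_le_mul_of_nonneg_left (show S ≤ (A - B) + 1 by omega) (Nat.zero_le r),
    mul_le_mul_of_nonneg_right (show r + 1 ≤ 2 ^ q by omega) (Nat.zero_le (A - B)),
    show i ≤ A - B by omega]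
end

section
/- Let 2 ≤ n ≤ k and 0 ≤ i ≤ k-1. Then β_n(k) + 1 ≥ β_n(k-i) + β_n(i+1), where β_n(j) = Σ_{t=0}^{n-1} C(j-1,t). -/
open Finset

lemma choose_add_le_add_choose (a b t : ℕ) (ht : 1 ≤ t) :
    a.choose t + b.choose t ≤ (a + b).choose t := by
  rw [Nat.add_choose_eq]
  have hne : ((t, 0) : ℕ × ℕ) ≠ (0, t) := by
    intro h; exact absurd (congrArg Prod.fst h) (by simpa using Nat.one_le_iff_ne_zero.mp ht)
  have hsub : ({(t, 0), (0, t)} : Finset (ℕ × ℕ)) ⊆ Finset.HasAntidiagonal.antidiagonal t := by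
    intro p hp
    simp only [mem_insert, mem_singleton] at hp
    rcases hp with rfl | rfl <;> simp [Finset.HasAntidiagonal.mem_antidiagonal]
  calc a.choose t + b.choose t
      = ∑ p ∈ ({(t, 0), (0, t)} : Finset (ℕ × ℕ)), a.choose p.1 * b.choose p.2 := by
        rw [Finset.sum_pair hne]; simp
    _ ≤ ∑ p ∈ Finset.HasAntidiagonal.antidiagonal t, a.choose p.1 * b.choose p.2 :=
        Finset.sum_le_sum_of_subset hsub

theorem beta_superadditive (n k i : ℕ) (hn : 2 ≤ n) (hnk : n ≤ k) (hi : i ≤ k - 1) :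
    (∑ t ∈ Finset.range n, Nat.choose (k - i - 1) t)
      + (∑ t ∈ Finset.range n, Nat.choose i t)
    ≤ (∑ t ∈ Finset.range n, Nat.choose (k - 1) t) + 1 := by
  have hki : k - i - 1 + i = k - 1 := by omega
  rw [← Finset.sum_add_distrib]
  calc ∑ t ∈ Finset.range n, ((k - i - 1).choose t + i.choose t)
      ≤ ∑ t ∈ Finset.range n, ((k - 1).choose t + if t = 0 then 1 else 0) := by
        apply Finset.sum_le_sum
        intro t _
        rcases Nat.eq_zero_or_pos t with rfl | ht
        · simp
        · have := choose_add_le_add_choose (k - i - 1) i t ht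
          rw [hki] at this
          omega
    _ = (∑ t ∈ Finset.range n, (k - 1).choose t) + 1 := by
        rw [Finset.sum_add_distrib, Finset.sum_ite_eq' (Finset.range n) 0 (fun _ => 1)]
        simp; omega
end

section
/- Over the field F_2, for k ≥ 1 the polynomial P_{k,k}(a_1,...,a_k) := Π_{∅ ≠ S ⊆ {1,...,k}} (Σ_{i∈S} a_i) equals Σ_{σ ∈ S_k} a_{σ(1)}^{2^{k-1}} a_{σ(2)}^{2^{k-2}} ··· a_{σ(k)}^{1}, the sum over all permutations σ of {1,...,k}. -/
open MvPolynomial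

namespace PkkAux

abbrev R2 (k : ℕ) := MvPolynomial (Fin k) (ZMod 2)

noncomputable def lin {k : ℕ} (S : Finset (Fin k)) : R2 k := ∑ i ∈ S, X i

noncomputable def rhs (k : ℕ) : R2 k :=
  ∑ σ : Equiv.Perm (Fin k), ∏ i : Fin k, (X (σ i) : R2 k) ^ (2 ^ (k - 1 - (i : ℕ)))


lemma zmod2_unit_eq_one {x : ZMod 2} (h : IsUnit x) : x = 1 := by
  have hx : x ≠ 0 := h.ne_zero
  revert hx; revert x; decide

lemma mv_unit_eq_one : ∀ (k : ℕ) (p : R2 k), IsUnit p → p = 1 := by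
  intro k
  induction k with
  | zero =>
    intro p hp
    let e := MvPolynomial.isEmptyAlgEquiv (ZMod 2) (Fin 0)
    have h1 : e p = 1 := zmod2_unit_eq_one (hp.map e)
    have h2 := congrArg e.symm h1
    simpa using h2
  | succ n ih =>
    intro p hp
    let e := MvPolynomial.finSuccEquiv (ZMod 2) n
    have hq : IsUnit (e p) := hp.map e
    rw [Polynomial.isUnit_iff] at hq
    obtain ⟨r, hr, hC⟩ := hq
    have hr1 : r = 1 := ih r hr
    have h1 : e p = 1 := by rw [← hC, hr1, map_one]
    have h2 := congrArg e.symm h1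
    simpa using h2

lemma units_subsingleton (k : ℕ) : Subsingleton (R2 k)ˣ :=
  ⟨fun u v => Units.ext (by
    rw [show (u : R2 k) = 1 from mv_unit_eq_one k _ u.isUnit,
      show (v : R2 k) = 1 from mv_unit_eq_one k _ v.isUnit])⟩

lemma coeff_lin {k : ℕ} (S : Finset (Fin k)) (i : Fin k) :
    coeff (Finsupp.single i 1) (lin S) = if i ∈ S then 1 else 0 := by
  classical
  rw [lin, coeff_sum]
  have h : ∀ j ∈ S, coeff (Finsupp.single i 1) (X j : R2 k)
      = if j = i then (1 : ZMod 2) else 0 := by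
    intro j _
    rw [coeff_X']
    congr 1
    simp [eq_iff_iff, Finsupp.single_left_inj (one_ne_zero (α := ℕ))]
  rw [Finset.sum_congr rfl h, Finset.sum_ite_eq' S i (fun _ => (1 : ZMod 2))]

lemma lin_injective {k : ℕ} : Function.Injective (lin (k := k)) := by
  intro S T h
  ext i
  have h2 := congrArg (coeff (Finsupp.single i 1)) h
  rw [coeff_lin, coeff_lin] at h2
  by_cases hS : i ∈ S <;> by_cases hT : i ∈ T <;>
    simp [hS, hT] at h2 ⊢

lemma prod_X_pow {k : ℕ} {ι : Type*} (s : Finset ι) (f : ι → Fin k) (e : ι → ℕ) :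
    (∏ i ∈ s, (X (f i) : R2 k) ^ e i)
      = monomial (∑ i ∈ s, Finsupp.single (f i) (e i)) 1 := by
  classical
  induction s using Finset.induction with
  | empty => simp
  | insert _ _ h ih =>
    rw [Finset.prod_insert h, Finset.sum_insert h, ih, X_pow_eq_monomial,
      monomial_mul, one_mul]

noncomputable def mexp (k : ℕ) (σ : Equiv.Perm (Fin k)) : Fin k →₀ ℕ :=
  ∑ i : Fin k, Finsupp.single (σ i) (2 ^ (k - 1 - (i : ℕ)))

lemma mexp_apply (k : ℕ) (σ : Equiv.Perm (Fin k)) (j : Fin k) :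
    mexp k σ j = 2 ^ (k - 1 - ((σ.symm j : Fin k) : ℕ)) := by
  classical
  rw [mexp, Finset.sum_apply']
  have h : ∀ i : Fin k, Finsupp.single (σ i) (2 ^ (k - 1 - (i : ℕ))) j
      = if i = σ.symm j then 2 ^ (k - 1 - (i : ℕ)) else 0 := by
    intro i
    rw [Finsupp.single_apply]
    congr 1
    simp [eq_iff_iff]
    constructor
    · intro hh; rw [← hh]; simp
    · intro hh; rw [hh]; simp
  rw [Finset.sum_congr rfl (fun i _ => h i),
    Finset.sum_ite_eq' Finset.univ (σ.symm j) (fun i => 2 ^ (k - 1 - (i : ℕ)))]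
  simp

lemma mexp_injective (k : ℕ) : Function.Injective (mexp k) := by
  intro σ τ h
  have h2 : ∀ j, σ.symm j = τ.symm j := by
    intro j
    have h3 := DFunLike.congr_fun h j
    rw [mexp_apply, mexp_apply] at h3
    have h4 := Nat.pow_right_injective (le_refl 2) h3
    have h5 : ((σ.symm j : Fin k) : ℕ) < k := (σ.symm j).isLt
    have h6 : ((τ.symm j : Fin k) : ℕ) < k := (τ.symm j).isLt
    exact Fin.ext (by omega)
  have h7 : σ.symm = τ.symm := Equiv.ext h2
  calc σ = σ.symm.symm := (Equiv.symm_symm σ).symm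
    _ = τ.symm.symm := by rw [h7]
    _ = τ := Equiv.symm_symm τ

lemma rhs_eq (k : ℕ) : rhs k = ∑ σ : Equiv.Perm (Fin k), monomial (mexp k σ) 1 := by
  rw [rhs]
  exact Finset.sum_congr rfl fun σ _ => prod_X_pow _ _ _

lemma coeff_rhs_mexp (k : ℕ) (τ : Equiv.Perm (Fin k)) :
    coeff (mexp k τ) (rhs k) = 1 := by
  classical
  rw [rhs_eq, coeff_sum]
  have h : ∀ σ : Equiv.Perm (Fin k), coeff (mexp k τ) (monomial (mexp k σ) (1 : ZMod 2))
      = if σ = τ then 1 else 0 := by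
    intro σ
    rw [coeff_monomial]
    congr 1
    simp [eq_iff_iff]
    exact ⟨fun hh => mexp_injective k hh, fun hh => by rw [hh]⟩
  rw [Finset.sum_congr rfl (fun σ _ => h σ),
    Finset.sum_ite_eq' Finset.univ τ (fun _ => (1 : ZMod 2))]
  simp

lemma rhs_ne_zero (k : ℕ) : rhs k ≠ 0 := by
  intro h
  have h2 := coeff_rhs_mexp k 1
  rw [h, coeff_zero] at h2
  exact one_ne_zero h2.symm


lemma sum_range_two_pow (k : ℕ) : ∑ j ∈ Finset.range k, 2 ^ j = 2 ^ k - 1 := by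
  induction k with
  | zero => simp
  | succ n ih =>
    rw [Finset.sum_range_succ, ih]
    have := Nat.one_le_two_pow (n := n)
    ring_nf
    omega

lemma sum_pow_eq (k : ℕ) : ∑ i : Fin k, 2 ^ (k - 1 - (i : ℕ)) = 2 ^ k - 1 := by
  rw [Fin.sum_univ_eq_sum_range (fun i => 2 ^ (k - 1 - i)) k,
    Finset.sum_range_reflect (fun j => 2 ^ j) k, sum_range_two_pow]

lemma degree_eq_sum_univ {k : ℕ} (d : Fin k →₀ ℕ) : d.degree = ∑ i : Fin k, d i :=
  Finset.sum_subset (Finset.subset_univ _)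
    (fun _ _ hi => Finsupp.notMem_support_iff.mp hi)

lemma mexp_degree (k : ℕ) (σ : Equiv.Perm (Fin k)) : (mexp k σ).degree = 2 ^ k - 1 := by
  rw [degree_eq_sum_univ]
  rw [Finset.sum_congr rfl (fun j _ => mexp_apply k σ j)]
  rw [Equiv.sum_comp σ.symm (fun i : Fin k => 2 ^ (k - 1 - (i : ℕ)))]
  exact sum_pow_eq k

lemma rhs_homog (k : ℕ) : (rhs k).IsHomogeneous (2 ^ k - 1) := by
  rw [rhs_eq]
  exact IsHomogeneous.sum _ _ _
    (fun σ _ => isHomogeneous_monomial _ (mexp_degree k σ))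

lemma lin_homog {k : ℕ} (S : Finset (Fin k)) : (lin S).IsHomogeneous 1 :=
  IsHomogeneous.sum _ _ _ (fun i _ => isHomogeneous_X _ _)

lemma card_filter (k : ℕ) :
    (Finset.univ.powerset.filter (fun S : Finset (Fin k) => S ≠ ∅)).card = 2 ^ k - 1 := by
  classical
  rw [Finset.filter_ne', Finset.card_erase_of_mem (by simp), Finset.card_powerset]
  simp

lemma prod_lin_homog (k : ℕ) :
    (∏ S ∈ Finset.univ.powerset.filter (fun S : Finset (Fin k) => S ≠ ∅), lin S).IsHomogeneous
      (2 ^ k - 1) := by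
  have h := IsHomogeneous.prod
    (Finset.univ.powerset.filter (fun S : Finset (Fin k) => S ≠ ∅)) lin (fun _ => 1)
    (fun S _ => lin_homog S)
  rwa [Finset.sum_const, smul_eq_mul, mul_one, card_filter] at h


lemma sign_smul_char2 {R : Type*} [CommRing R] [CharP R 2] (ε : ℤˣ) (x : R) :
    ε • x = x := by
  rcases Int.units_eq_one_or ε with h | h <;> rw [h, Units.smul_def]
  · rw [Units.val_one, one_zsmul]
  · rw [Units.val_neg, Units.val_one, neg_one_zsmul, CharTwo.neg_eq]

lemma rename_rhs {k : ℕ} (π : Equiv.Perm (Fin k)) :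
    rename (⇑π) (rhs k) = rhs k := by
  rw [rhs, map_sum]
  have h : ∀ σ : Equiv.Perm (Fin k),
      rename (⇑π) (∏ i : Fin k, (X (σ i) : R2 k) ^ (2 ^ (k - 1 - (i : ℕ))))
        = ∏ i : Fin k, (X (((Equiv.mulLeft π) σ) i) : R2 k) ^ (2 ^ (k - 1 - (i : ℕ))) := by
    intro σ
    rw [map_prod]
    exact Finset.prod_congr rfl fun i _ => by rw [map_pow, rename_X]; rfl
  rw [Finset.sum_congr rfl (fun σ _ => h σ)]
  exact Equiv.sum_comp (Equiv.mulLeft π)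
    (fun σ : Equiv.Perm (Fin k) => ∏ i : Fin k, (X (σ i) : R2 k) ^ (2 ^ (k - 1 - (i : ℕ))))

lemma lin_dvd_rhs_zero {n : ℕ} (S : Finset (Fin (n + 1))) (h0 : (0 : Fin (n + 1)) ∈ S) :
    lin S ∣ rhs (n + 1) := by
  classical
  haveI : Fact (Nat.Prime 2) := ⟨Nat.prime_two⟩
  set u : Fin (n + 1) → MvPolynomial (Fin n) (ZMod 2) :=
    Fin.cases 0 (fun i => X i) with hu
  set g : MvPolynomial (Fin n) (ZMod 2) := ∑ j ∈ S.erase 0, u j with hg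
  set v : Fin (n + 1) → MvPolynomial (Fin n) (ZMod 2) :=
    Fin.cases g (fun i => X i) with hv
  have hvu : ∀ j : Fin (n + 1), j ≠ 0 → v j = u j := by
    intro j hj
    obtain ⟨i, rfl⟩ := Fin.exists_succ_eq.mpr hj
    simp [hu, hv]
  have hsum_erase : ∑ j ∈ S.erase 0, v j = g := by
    rw [hg]
    exact Finset.sum_congr rfl fun j hj => hvu j (Finset.ne_of_mem_erase hj)
  -- aeval v kills rhs
  have hdet : (aeval v) (rhs (n + 1)) = 0 := by
    set M : Matrix (Fin (n + 1)) (Fin (n + 1)) (MvPolynomial (Fin n) (ZMod 2)) :=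
      Matrix.of (fun i j => (v i) ^ (2 ^ (n + 1 - 1 - (j : ℕ)))) with hM
    have hMdet : (aeval v) (rhs (n + 1)) = M.det := by
      rw [Matrix.det_apply, rhs, map_sum]
      refine Finset.sum_congr rfl fun σ _ => ?_
      rw [sign_smul_char2, map_prod]
      refine Finset.prod_congr rfl fun i _ => ?_
      rw [map_pow, aeval_X]
      rfl
    have hrow0 : M 0 = ∑ j : Fin (n + 1),
        (if j ∈ S.erase 0 then (1 : MvPolynomial (Fin n) (ZMod 2)) else 0) • M j := by
      funext c
      rw [Finset.sum_apply]
      have h1 : ∀ j : Fin (n + 1),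
          ((if j ∈ S.erase 0 then (1 : MvPolynomial (Fin n) (ZMod 2)) else 0) • M j) c
            = if j ∈ S.erase 0 then M j c else 0 := by
        intro j
        by_cases hj : j ∈ S.erase 0 <;> simp [hj]
      rw [Finset.sum_congr rfl (fun j _ => h1 j), Finset.sum_ite_mem,
        Finset.univ_inter]
      have h2 : M 0 c = g ^ (2 ^ (n + 1 - 1 - (c : ℕ))) := by
        simp [hM, hv]
      rw [h2, hg, sum_pow_char_pow]
      refine Finset.sum_congr rfl fun j hj => ?_
      rw [← hvu j (Finset.ne_of_mem_erase hj)]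
      rfl
    have hMeq : M = M.updateRow 0 (∑ j : Fin (n + 1),
        (if j ∈ S.erase 0 then (1 : MvPolynomial (Fin n) (ZMod 2)) else 0) • M j) := by
      rw [← hrow0, Matrix.updateRow_eq_self]
    have h3 : M.det = (if (0 : Fin (n + 1)) ∈ S.erase 0
        then (1 : MvPolynomial (Fin n) (ZMod 2)) else 0) • M.det := by
      conv_lhs => rw [hMeq]
      exact Matrix.det_updateRow_sum M 0 _
    rw [if_neg (Finset.notMem_erase 0 S), zero_smul] at h3
    rw [hMdet, h3]
  -- transfer to polynomial ring and use factor theorem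
  set e := MvPolynomial.finSuccEquiv (ZMod 2) n with he
  have hcomp : ∀ p : R2 (n + 1), Polynomial.eval g (e p) = aeval v p := by
    have hhom : (Polynomial.evalRingHom g).comp
        (e : R2 (n + 1) →+* Polynomial (MvPolynomial (Fin n) (ZMod 2)))
        = ((aeval v : R2 (n + 1) →ₐ[ZMod 2] MvPolynomial (Fin n) (ZMod 2)) :
            R2 (n + 1) →+* MvPolynomial (Fin n) (ZMod 2)) := by
      apply MvPolynomial.ringHom_ext
      · intro c
        rw [RingHom.comp_apply]
        rw [show ((e : R2 (n + 1) →+* Polynomial (MvPolynomial (Fin n) (ZMod 2))) (C c))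
            = Polynomial.C (C c) by simp [he, finSuccEquiv_apply, eval₂Hom_C]]
        simp
      · intro i
        refine Fin.cases ?_ ?_ i
        · simp [he, finSuccEquiv_X_zero, hv]
        · intro i
          simp [he, finSuccEquiv_X_succ, hv]
    intro p
    exact RingHom.congr_fun hhom p
  have hroot : (Polynomial.X - Polynomial.C g) ∣ e (rhs (n + 1)) := by
    rw [Polynomial.dvd_iff_isRoot, Polynomial.IsRoot, hcomp, hdet]
  have hlin : e (lin S) = Polynomial.X - Polynomial.C g := by
    rw [lin, map_sum, ← Finset.add_sum_erase S _ h0]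
    have h2 : ∑ j ∈ S.erase 0, e (X j) = Polynomial.C g := by
      rw [hg, map_sum]
      refine Finset.sum_congr rfl fun j hj => ?_
      obtain ⟨i, rfl⟩ := Fin.exists_succ_eq.mpr (Finset.ne_of_mem_erase hj)
      rw [he, finSuccEquiv_X_succ]
      congr 1
    rw [h2, he, finSuccEquiv_X_zero, sub_eq_add_neg, ← Polynomial.C_neg,
      CharTwo.neg_eq]
  rw [← hlin] at hroot
  have hfinal := map_dvd e.symm hroot
  simpa using hfinal


lemma rename_perm_lin {k : ℕ} (π : Equiv.Perm (Fin k)) (S : Finset (Fin k)) :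
    rename (⇑π) (lin S) = lin (S.image π) := by
  classical
  rw [lin, map_sum, lin, Finset.sum_image (fun x _ y _ h => π.injective h)]
  exact Finset.sum_congr rfl fun i _ => rename_X _ _

lemma lin_dvd_rhs {n : ℕ} (S : Finset (Fin (n + 1))) (hS : S ≠ ∅) :
    lin S ∣ rhs (n + 1) := by
  classical
  obtain ⟨j0, hj0⟩ := Finset.nonempty_iff_ne_empty.mpr hS
  set π : Equiv.Perm (Fin (n + 1)) := Equiv.swap 0 j0 with hπ
  have h0 : (0 : Fin (n + 1)) ∈ S.image π :=
    Finset.mem_image.mpr ⟨j0, hj0, Equiv.swap_apply_right 0 j0⟩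
  have hd := lin_dvd_rhs_zero (S.image π) h0
  have hd2 := map_dvd (rename (⇑π) : R2 (n + 1) →ₐ[ZMod 2] R2 (n + 1)) hd
  rw [show (rename (⇑π) : R2 (n + 1) →ₐ[ZMod 2] R2 (n + 1)) (lin (S.image π))
      = rename (⇑π) (lin (S.image π)) from rfl,
    show (rename (⇑π) : R2 (n + 1) →ₐ[ZMod 2] R2 (n + 1)) (rhs (n + 1))
      = rename (⇑π) (rhs (n + 1)) from rfl,
    rename_perm_lin, rename_rhs, Finset.image_image] at hd2
  have himg : S.image (⇑π ∘ ⇑π) = S := by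
    have : ∀ x : Fin (n + 1), (⇑π ∘ ⇑π) x = x := fun x => Equiv.swap_apply_self 0 j0 x
    rw [show (⇑π ∘ ⇑π) = id from funext this, Finset.image_id]
  rwa [himg] at hd2

lemma X_prime {n : ℕ} (j : Fin (n + 1)) : Prime (X j : R2 (n + 1)) := by
  have h0 : Prime (X 0 : R2 (n + 1)) := by
    rw [← MulEquiv.prime_iff (MvPolynomial.finSuccEquiv (ZMod 2) n).toMulEquiv]
    have : (MvPolynomial.finSuccEquiv (ZMod 2) n).toMulEquiv (X 0 : R2 (n + 1))
        = Polynomial.X := finSuccEquiv_X_zero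
    rw [this]
    exact Polynomial.prime_X
  have h1 := (MulEquiv.prime_iff (renameEquiv (ZMod 2) (Equiv.swap 0 j)).toMulEquiv).mpr h0
  have h2 : (renameEquiv (ZMod 2) (Equiv.swap 0 j)).toMulEquiv (X 0 : R2 (n + 1))
      = X j := by
    rw [show (renameEquiv (ZMod 2) (Equiv.swap 0 j)).toMulEquiv (X 0 : R2 (n + 1))
        = rename (⇑(Equiv.swap 0 j)) (X 0) from rfl, rename_X, Equiv.swap_apply_left]
  rwa [h2] at h1

lemma lin_prime {n : ℕ} (S : Finset (Fin (n + 1))) (hS : S ≠ ∅) : Prime (lin S) := by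
  classical
  obtain ⟨j0, hj0⟩ := Finset.nonempty_iff_ne_empty.mpr hS
  set w : Fin (n + 1) → R2 (n + 1) := fun j => if j = j0 then lin S else X j with hw
  set τ : R2 (n + 1) →ₐ[ZMod 2] R2 (n + 1) := aeval w with hτ
  have hτlin : τ (lin S) = X j0 := by
    rw [lin, map_sum]
    rw [Finset.sum_congr rfl (fun i (_ : i ∈ S) => show τ (X i) = w i from aeval_X w i)]
    rw [← Finset.add_sum_erase S w hj0]
    have h1 : w j0 = lin S := by simp [hw]
    have h2 : ∑ i ∈ S.erase j0, w i = ∑ i ∈ S.erase j0, X i :=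
      Finset.sum_congr rfl fun i hi => by simp [hw, Finset.ne_of_mem_erase hi]
    rw [h1, h2, lin, ← Finset.add_sum_erase S X hj0, add_assoc,
      CharTwo.add_self_eq_zero, add_zero]
  have hτ2 : τ.comp τ = AlgHom.id (ZMod 2) (R2 (n + 1)) := by
    apply MvPolynomial.algHom_ext
    intro j
    by_cases hj : j = j0
    · subst hj
      rw [AlgHom.comp_apply, show τ (X j) = w j from aeval_X w j]
      simp only [hw, if_pos rfl]
      rw [hτlin, AlgHom.id_apply]
    · rw [AlgHom.comp_apply, show τ (X j) = w j from aeval_X w j]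
      simp only [hw, if_neg hj]
      rw [show τ (X j) = w j from aeval_X w j]
      simp [hw, hj]
  set E : R2 (n + 1) ≃ₐ[ZMod 2] R2 (n + 1) := AlgEquiv.ofAlgHom τ τ hτ2 hτ2 with hE
  have hEX : E.toMulEquiv (X j0 : R2 (n + 1)) = lin S := by
    rw [show E.toMulEquiv (X j0 : R2 (n + 1)) = τ (X j0) from rfl,
      show τ (X j0) = w j0 from aeval_X w j0]
    simp [hw]
  have := (MulEquiv.prime_iff E.toMulEquiv).mpr (X_prime j0)
  rwa [hEX] at this


lemma prod_lin_dvd (n : ℕ) :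
    (∏ S ∈ Finset.univ.powerset.filter (fun S : Finset (Fin (n + 1)) => S ≠ ∅), lin S)
      ∣ rhs (n + 1) := by
  classical
  haveI := units_subsingleton (n + 1)
  set F := Finset.univ.powerset.filter (fun S : Finset (Fin (n + 1)) => S ≠ ∅) with hF
  have h1 : (∏ S ∈ F, lin S) = ∏ p ∈ F.image lin, p := by
    rw [Finset.prod_image (fun x _ y _ h => lin_injective h)]
  rw [h1]
  refine Finset.prod_primes_dvd _ (fun p hp => ?_) (fun p hp => ?_)
  · obtain ⟨S, hS, rfl⟩ := Finset.mem_image.mp hp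
    exact lin_prime S (Finset.mem_filter.mp hS).2
  · obtain ⟨S, hS, rfl⟩ := Finset.mem_image.mp hp
    exact lin_dvd_rhs S (Finset.mem_filter.mp hS).2

theorem main (n : ℕ) :
    (∏ S ∈ Finset.univ.powerset.filter (fun S : Finset (Fin (n + 1)) => S ≠ ∅), lin S)
      = rhs (n + 1) := by
  classical
  obtain ⟨q, hq⟩ := prod_lin_dvd n
  set P := ∏ S ∈ Finset.univ.powerset.filter (fun S : Finset (Fin (n + 1)) => S ≠ ∅), lin S
    with hP
  set d : ℕ := 2 ^ (n + 1) - 1 with hd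
  have hPh : P.IsHomogeneous d := prod_lin_homog (n + 1)
  have hRh : (rhs (n + 1)).IsHomogeneous d := rhs_homog (n + 1)
  have hkey : rhs (n + 1) = P * C (coeff 0 q) := by
    have h1 : homogeneousComponent d (rhs (n + 1)) = rhs (n + 1) := by
      rw [homogeneousComponent_of_mem ((mem_homogeneousSubmodule d _).mpr hRh), if_pos rfl]
    conv_lhs => rw [← h1, hq]
    conv_lhs => rw [show q = ∑ i ∈ Finset.range (q.totalDegree + 1), homogeneousComponent i q
      from (sum_homogeneousComponent q).symm]
    rw [Finset.mul_sum, map_sum]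
    have h2 : ∀ j ∈ Finset.range (q.totalDegree + 1),
        homogeneousComponent d (P * homogeneousComponent j q)
          = if j = 0 then P * homogeneousComponent 0 q else 0 := by
      intro j _
      have h3 : (P * homogeneousComponent j q).IsHomogeneous (d + j) :=
        hPh.mul (homogeneousComponent_isHomogeneous j q)
      rw [homogeneousComponent_of_mem ((mem_homogeneousSubmodule _ _).mpr h3)]
      by_cases hj : j = 0
      · subst hj; simp
      · rw [if_neg (by omega), if_neg hj]
    rw [Finset.sum_congr rfl h2, Finset.sum_ite_eq' _ 0 _]
    rw [if_pos (Finset.mem_range.mpr (by omega)), homogeneousComponent_zero]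
  have hc : coeff 0 q = 1 := by
    have h01 : ∀ x : ZMod 2, x = 0 ∨ x = 1 := by decide
    rcases h01 (coeff 0 q) with h | h
    · exfalso
      apply rhs_ne_zero (n + 1)
      rw [hkey, h, map_zero, mul_zero]
    · exact h
  rw [hkey, hc, map_one, mul_one]


end PkkAux

theorem P_kk_formula (k : ℕ) (hk : 1 ≤ k) :
    ∏ S ∈ Finset.univ.powerset.filter (fun S : Finset (Fin k) => S ≠ ∅),
        (∑ i ∈ S, (X i : MvPolynomial (Fin k) (ZMod 2)))
    = ∑ σ : Equiv.Perm (Fin k), ∏ i : Fin k, (X (σ i) : MvPolynomial (Fin k) (ZMod 2)) ^ (2 ^ (k - 1 - (i : ℕ))) := by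
  obtain ⟨n, rfl⟩ : ∃ n, k = n + 1 := ⟨k - 1, by omega⟩
  exact PkkAux.main n
end

section
/- Let 2 ≤ n ≤ k, m = 2^q + r with q ≥ 1 and 0 ≤ r < 2^q, and d* = 2^q·β_n(k) + r. Then the monomial p* = (a_1^{β_n(k)} a_2^{β_n(k-1)} ··· a_k^{β_n(1)})^{2^q} · (a_1^{β_n(1)} a_2^{β_n(2)} ··· a_k^{β_n(k)})^r is nonzero in F_2[a_1,...,a_k]/(a_1^{d*+1}, a_2^{d*}, ..., a_k^{d*-k+2}), i.e. the exponent of a_{i+1} in p* is at most d* - i for 0 ≤ i ≤ k-1. -/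
open MvPolynomial

-- Vandermonde-type inequality: C(a-b,t) + C(b,t) ≤ C(a,t) for 1 ≤ t, b ≤ a
lemma choose_split_le (a b t : ℕ) (hb : b ≤ a) (ht : 1 ≤ t) :
    Nat.choose (a - b) t + Nat.choose b t ≤ Nat.choose a t := by
  have hsum : Nat.choose a t = ∑ ij ∈ Finset.HasAntidiagonal.antidiagonal t,
      Nat.choose (a - b) ij.1 * Nat.choose b ij.2 := by
    rw [← Nat.add_choose_eq]; congr 1; omega
  rw [hsum]
  have hmem1 : ((t, 0) : ℕ × ℕ) ∈ Finset.HasAntidiagonal.antidiagonal t := by simp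
  have hmem2 : ((0, t) : ℕ × ℕ) ∈ Finset.HasAntidiagonal.antidiagonal t := by simp
  have hsub : ({(t, 0), (0, t)} : Finset (ℕ × ℕ)) ⊆ Finset.HasAntidiagonal.antidiagonal t := by
    intro x hx
    simp only [Finset.mem_insert, Finset.mem_singleton] at hx
    rcases hx with rfl | rfl <;> simp
  have hne : ((t, 0) : ℕ × ℕ) ≠ (0, t) := by
    intro h'
    have := congrArg Prod.fst h'
    simp only at this
    omega
  calc Nat.choose (a - b) t + Nat.choose b t
      = ∑ ij ∈ ({(t, 0), (0, t)} : Finset (ℕ × ℕ)),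
          Nat.choose (a - b) ij.1 * Nat.choose b ij.2 := by
        rw [Finset.sum_insert (by simpa using hne), Finset.sum_singleton]
        simp
    _ ≤ ∑ ij ∈ Finset.HasAntidiagonal.antidiagonal t, Nat.choose (a - b) ij.1 * Nat.choose b ij.2 :=
        Finset.sum_le_sum_of_subset hsub

lemma keyA (k n i : ℕ) (hn : 1 ≤ n) (hik : i < k) :
    (∑ t ∈ Finset.range n, Nat.choose (k - i - 1) t)
      + (∑ t ∈ Finset.range n, Nat.choose i t)
      ≤ (∑ t ∈ Finset.range n, Nat.choose (k - 1) t) + 1 := by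
  have h0 : (0 : ℕ) ∈ Finset.range n := by simp; omega
  rw [← Finset.sum_erase_add _ _ h0, ← Finset.sum_erase_add _ _ h0,
    ← Finset.sum_erase_add _ _ h0]
  have hterm : ∀ t ∈ (Finset.range n).erase 0,
      Nat.choose (k - i - 1) t + Nat.choose i t ≤ Nat.choose (k - 1) t := by
    intro t ht
    have ht1 : 1 ≤ t := by simp [Finset.mem_erase] at ht; omega
    have : k - i - 1 = (k - 1) - i := by omega
    rw [this]
    exact choose_split_le (k - 1) i t (by omega) ht1
  have := Finset.sum_le_sum hterm
  rw [Finset.sum_add_distrib] at this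
  simp only [Nat.choose_zero_right]
  omega

lemma keyB (k n i : ℕ) (hn : 2 ≤ n) (hik : i < k) :
    (∑ t ∈ Finset.range n, Nat.choose (k - i - 1) t) + i
      ≤ ∑ t ∈ Finset.range n, Nat.choose (k - 1) t := by
  have h1 : (1 : ℕ) ∈ Finset.range n := by simp; omega
  rw [← Finset.sum_erase_add _ _ h1, ← Finset.sum_erase_add _ _ h1]
  have hterm : ∀ t ∈ (Finset.range n).erase 1,
      Nat.choose (k - i - 1) t ≤ Nat.choose (k - 1) t :=
    fun t _ => Nat.choose_le_choose t (by omega)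
  have := Finset.sum_le_sum hterm
  simp only [Nat.choose_one_right]
  omega

lemma key_ineq (k n q r i : ℕ) (hn : 2 ≤ n) (hr : r < 2 ^ q) (hik : i < k) :
    2 ^ q * (∑ t ∈ Finset.range n, Nat.choose (k - i - 1) t)
      + r * (∑ t ∈ Finset.range n, Nat.choose i t) + i
      ≤ 2 ^ q * (∑ t ∈ Finset.range n, Nat.choose (k - 1) t) + r := by
  have hA := keyA k n i (by omega) hik
  have hB := keyB k n i hn hik
  set P := 2 ^ q
  set S := ∑ t ∈ Finset.range n, Nat.choose (k - 1) t
  set Si := ∑ t ∈ Finset.range n, Nat.choose (k - i - 1) t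
  set T := ∑ t ∈ Finset.range n, Nat.choose i t
  zify at hA hB hr ⊢
  nlinarith [mul_nonneg (by linarith : (0:ℤ) ≤ (P:ℤ) - r) (by linarith : (0:ℤ) ≤ (S:ℤ) - Si - i),
    mul_nonneg (by positivity : (0:ℤ) ≤ (r:ℤ)) (by linarith : (0:ℤ) ≤ (S:ℤ) + 1 - Si - T)]

theorem p_star_ne_zero (k n q r m d : ℕ) (hn : 2 ≤ n) (hnk : n ≤ k)
    (hq : 1 ≤ q) (hr : r < 2 ^ q) (hm : m = 2 ^ q + r)
    (hd : d = 2 ^ q * (∑ t ∈ Finset.range n, Nat.choose (k - 1) t) + r) :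
    Ideal.Quotient.mk
        (Ideal.span (Set.range fun i : Fin k =>
          (X i : MvPolynomial (Fin k) (ZMod 2)) ^ (d - (i : ℕ) + 1)))
        (∏ i : Fin k, (X i : MvPolynomial (Fin k) (ZMod 2)) ^
          (2 ^ q * (∑ t ∈ Finset.range n, Nat.choose (k - (i : ℕ) - 1) t)
            + r * (∑ t ∈ Finset.range n, Nat.choose (i : ℕ) t))) ≠ 0 := by
  set e : Fin k → ℕ := fun i =>
    2 ^ q * (∑ t ∈ Finset.range n, Nat.choose (k - (i : ℕ) - 1) t)
      + r * (∑ t ∈ Finset.range n, Nat.choose (i : ℕ) t) with he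
  set E : Fin k →₀ ℕ := Finsupp.equivFunOnFinite.symm e with hE
  have hEi : ∀ i, E i = e i := fun i => rfl
  have hkey : ∀ i : Fin k, E i + (i : ℕ) ≤ d := by
    intro i
    rw [hEi, he, hd]
    exact key_ineq k n q r i hn hr i.isLt
  have hprod : (∏ i : Fin k, (X i : MvPolynomial (Fin k) (ZMod 2)) ^ e i)
      = monomial E 1 := by
    rw [← prod_X_pow_eq_monomial]
    apply (Finset.prod_subset (Finset.subset_univ E.support) ?_).symm
    intro x _ hx
    rw [Finsupp.notMem_support_iff] at hx
    rw [hEi x] at hx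
    rw [hx, pow_zero]
  rw [show (∏ i : Fin k, (X i : MvPolynomial (Fin k) (ZMod 2)) ^
          (2 ^ q * (∑ t ∈ Finset.range n, Nat.choose (k - (i : ℕ) - 1) t)
            + r * (∑ t ∈ Finset.range n, Nat.choose (i : ℕ) t)))
      = monomial E 1 from hprod]
  intro hzero
  rw [Ideal.Quotient.eq_zero_iff_mem, Ideal.mem_span_range_iff_exists_fun] at hzero
  obtain ⟨c, hc⟩ := hzero
  have := congrArg (coeff E) hc
  rw [coeff_monomial, if_pos rfl] at this
  rw [coeff_sum] at this
  have hzero' : ∀ i ∈ Finset.univ,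
      coeff E (c i * (X i : MvPolynomial (Fin k) (ZMod 2)) ^ (d - (i : ℕ) + 1)) = 0 := by
    intro i _
    rw [X_pow_eq_monomial, coeff_mul_monomial', if_neg]
    rw [Finsupp.single_le_iff]
    have := hkey i
    omega
  rw [Finset.sum_congr rfl hzero', Finset.sum_const_zero] at this
  exact one_ne_zero this.symm
end

section
/- For every finite measure μ on R^2 vanishing on lines, there exist two perpendicular lines that divide the plane into four regions each of measure μ(R^2)/4 (the pancake theorem). -/
open MeasureTheory Filter Set Topology

namespace Pancake

noncomputable section

abbrev E2 := EuclideanSpace ℝ (Fin 2)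

/-- Lower half-plane. -/
def Hle (v : E2) (c : ℝ) : Set E2 := {x | (inner ℝ v x : ℝ) ≤ c}

/-- Upper half-plane. -/
def Hge (v : E2) (c : ℝ) : Set E2 := {x | c ≤ (inner ℝ v x : ℝ)}

lemma measurable_Hle (v : E2) (c : ℝ) : MeasurableSet (Hle v c) :=
  measurableSet_le ((continuous_const.inner continuous_id).measurable) measurable_const

lemma measurable_Hge (v : E2) (c : ℝ) : MeasurableSet (Hge v c) :=
  measurableSet_le measurable_const ((continuous_const.inner continuous_id).measurable)

lemma Hle_mono (v : E2) {c c' : ℝ} (h : c ≤ c') : Hle v c ⊆ Hle v c' :=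
  fun x hx => le_trans hx h

variable (μ : Measure E2) [IsFiniteMeasure μ]

/-- Splitting a measurable set by a line of measure zero. -/
lemma split (v : E2) (hv : v ≠ 0)
    (hvanish : ∀ v : E2, v ≠ 0 → ∀ c : ℝ, μ {x | (inner ℝ v x : ℝ) = c} = 0)
    (c : ℝ) {S : Set E2} (hS : MeasurableSet S) :
    μ (Hle v c ∩ S) + μ (Hge v c ∩ S) = μ S := by
  have hunion : (Hle v c ∩ S) ∪ (Hge v c ∩ S) = S := by
    ext x
    simp only [Hle, Hge, Set.mem_union, Set.mem_inter_iff, Set.mem_setOf_eq]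
    constructor
    · rintro (⟨_, h⟩ | ⟨_, h⟩) <;> exact h
    · intro h
      rcases le_total (inner ℝ v x : ℝ) c with h' | h'
      · exact Or.inl ⟨h', h⟩
      · exact Or.inr ⟨h', h⟩
  have hinter : μ ((Hle v c ∩ S) ∩ (Hge v c ∩ S)) = 0 := by
    refine measure_mono_null (fun x hx => ?_) (hvanish v hv c)
    obtain ⟨⟨h1, _⟩, h2, _⟩ := hx
    exact le_antisymm h1 h2
  have := measure_union_add_inter (μ := μ) (Hle v c ∩ S) ((measurable_Hge v c).inter hS)
  rw [hunion, hinter, add_zero] at this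
  exact this.symm

/-- helper: eventually le iff, for sequences with distinct limits -/
lemma eventually_le_iff {a b : ℝ} (h : a ≠ b) {an bn : ℕ → ℝ}
    (ha : Tendsto an atTop (𝓝 a)) (hb : Tendsto bn atTop (𝓝 b)) :
    ∀ᶠ n in atTop, ((an n ≤ bn n) ↔ (a ≤ b)) := by
  rcases lt_or_gt_of_ne h with hlt | hgt
  · filter_upwards [ha.eventually_lt hb hlt] with n hn
    simp [hn.le, hlt.le]
  · filter_upwards [hb.eventually_lt ha hgt] with n hn
    simp [not_le.mpr hn, not_le.mpr hgt]

variable (μ : Measure E2) [IsFiniteMeasure μ]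

/-- Key convergence lemma for quadrants. -/
lemma quad_tendsto
    (hvanish : ∀ v : E2, v ≠ 0 → ∀ c : ℝ, μ {x | (inner ℝ v x : ℝ) = c} = 0)
    {v w : E2} (hv : v ≠ 0) (hw : w ≠ 0)
    {vn wn : ℕ → E2} {cn dn : ℕ → ℝ} {c d : ℝ}
    (hvn : Tendsto vn atTop (𝓝 v)) (hwn : Tendsto wn atTop (𝓝 w))
    (hcn : Tendsto cn atTop (𝓝 c)) (hdn : Tendsto dn atTop (𝓝 d)) :
    Tendsto (fun n => μ (Hle (vn n) (cn n) ∩ Hle (wn n) (dn n))) atTop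
      (𝓝 (μ (Hle v c ∩ Hle w d))) := by
  set S : Set E2 := Hle v c ∩ Hle w d with hS
  set Sn : ℕ → Set E2 := fun n => Hle (vn n) (cn n) ∩ Hle (wn n) (dn n) with hSn
  have hmeasS : MeasurableSet S := (measurable_Hle v c).inter (measurable_Hle w d)
  have hmeasSn : ∀ n, MeasurableSet (Sn n) :=
    fun n => (measurable_Hle _ _).inter (measurable_Hle _ _)
  have key : Tendsto (fun n => ∫⁻ x, (Sn n).indicator (fun _ => (1 : ENNReal)) x ∂μ) atTop
      (𝓝 (∫⁻ x, S.indicator (fun _ => (1 : ENNReal)) x ∂μ)) := by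
    refine tendsto_lintegral_of_dominated_convergence (fun _ => (1 : ENNReal))
      (fun n => (measurable_const.indicator (hmeasSn n))) ?_ ?_ ?_
    · intro n
      filter_upwards with x
      by_cases hx : x ∈ Sn n <;> simp [hx]
    · simp [lintegral_const, measure_ne_top μ]
    · have hnull : μ ({x | (inner ℝ v x : ℝ) = c} ∪ {x | (inner ℝ w x : ℝ) = d}) = 0 :=
        measure_union_null (hvanish v hv c) (hvanish w hw d)
      filter_upwards [(measure_eq_zero_iff_ae_notMem (μ := μ)).mp hnull] with x hx
      simp only [Set.mem_union, Set.mem_setOf_eq, not_or] at hx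
      obtain ⟨hx1, hx2⟩ := hx
      have h1 : Tendsto (fun n => (inner ℝ (vn n) x : ℝ)) atTop (𝓝 (inner ℝ v x : ℝ)) :=
        ((continuous_id.inner (continuous_const : Continuous fun _ : E2 => x)).tendsto v).comp hvn
      have h2 : Tendsto (fun n => (inner ℝ (wn n) x : ℝ)) atTop (𝓝 (inner ℝ w x : ℝ)) :=
        ((continuous_id.inner (continuous_const : Continuous fun _ : E2 => x)).tendsto w).comp hwn
      have e1 := eventually_le_iff hx1 h1 hcn
      have e2 := eventually_le_iff hx2 h2 hdn
      have : ∀ᶠ n in atTop,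
          (Sn n).indicator (fun _ => (1 : ENNReal)) x = S.indicator (fun _ => (1 : ENNReal)) x := by
        filter_upwards [e1, e2] with n hn1 hn2
        have hmem : x ∈ Sn n ↔ x ∈ S := by
          simp only [hSn, hS, Hle, Set.mem_inter_iff, Set.mem_setOf_eq]
          rw [hn1, hn2]
        by_cases hx' : x ∈ S
        · simp [hx', hmem.mpr hx']
        · have hns : x ∉ Sn n := fun h => hx' (hmem.mp h)
          simp [hx', hns]
      exact Tendsto.congr' (EventuallyEq.symm this) tendsto_const_nhds
  have hrw : ∀ s : Set E2, MeasurableSet s →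
      ∫⁻ x, s.indicator (fun _ => (1 : ENNReal)) x ∂μ = μ s := fun s hs => by
    rw [lintegral_indicator_const hs, one_mul]
  have h1 : (fun n => ∫⁻ x, (Sn n).indicator (fun _ => (1 : ENNReal)) x ∂μ)
      = fun n => μ (Sn n) := funext fun n => hrw _ (hmeasSn n)
  rw [h1, hrw _ hmeasS] at key
  exact key

/-- Half-plane version. -/
lemma half_tendsto
    (hvanish : ∀ v : E2, v ≠ 0 → ∀ c : ℝ, μ {x | (inner ℝ v x : ℝ) = c} = 0)
    {v : E2} (hv : v ≠ 0) {vn : ℕ → E2} {cn : ℕ → ℝ} {c : ℝ}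
    (hvn : Tendsto vn atTop (𝓝 v)) (hcn : Tendsto cn atTop (𝓝 c)) :
    Tendsto (fun n => μ (Hle (vn n) (cn n))) atTop (𝓝 (μ (Hle v c))) := by
  have := quad_tendsto μ hvanish hv hv hvn hvn hcn hcn
  simpa [Set.inter_self] using this

lemma tendsto_Hle_atBot (v : E2) :
    Tendsto (fun n : ℕ => μ (Hle v (-(n : ℝ)))) atTop (𝓝 0) := by
  have hiInter : (⋂ n : ℕ, Hle v (-(n : ℝ))) = ∅ := by
    ext x
    simp only [Set.mem_iInter, Set.mem_empty_iff_false, iff_false, not_forall, Hle,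
      Set.mem_setOf_eq, not_le]
    obtain ⟨n, hn⟩ := exists_nat_gt (-(inner ℝ v x : ℝ))
    exact ⟨n, by linarith⟩
  have := tendsto_measure_iInter_atTop (μ := μ) (s := fun n : ℕ => Hle v (-(n : ℝ)))
    (fun n => (measurable_Hle v _).nullMeasurableSet)
    (fun m n hmn => Hle_mono v (by exact_mod_cast neg_le_neg (Nat.cast_le.mpr hmn)))
    ⟨0, measure_ne_top μ _⟩
  rw [hiInter] at this
  simpa [Function.comp_def] using this

lemma tendsto_Hle_atTop (v : E2) :
    Tendsto (fun n : ℕ => μ (Hle v (n : ℝ))) atTop (𝓝 (μ Set.univ)) := by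
  have hiUnion : (⋃ n : ℕ, Hle v (n : ℝ)) = Set.univ := by
    ext x
    simp only [Set.mem_iUnion, Set.mem_univ, iff_true, Hle, Set.mem_setOf_eq]
    obtain ⟨n, hn⟩ := exists_nat_gt (inner ℝ v x : ℝ)
    exact ⟨n, hn.le⟩
  have := tendsto_measure_iUnion_atTop (μ := μ) (s := fun n : ℕ => Hle v (n : ℝ))
    (fun m n hmn => Hle_mono v (Nat.cast_le.mpr hmn))
  rw [hiUnion] at this
  exact this

lemma exists_lt_half (hpos : 0 < μ Set.univ) (v : E2) :
    ∃ a : ℝ, μ (Hle v a) < μ Set.univ / 2 := by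
  have h2 : (0 : ENNReal) < μ Set.univ / 2 := ENNReal.div_pos hpos.ne' (by norm_num)
  obtain ⟨n, hn⟩ := ((tendsto_Hle_atBot μ v).eventually_lt_const h2).exists
  exact ⟨-(n : ℝ), hn⟩

lemma exists_half_lt (hpos : 0 < μ Set.univ) (v : E2) :
    ∃ b : ℝ, μ Set.univ / 2 < μ (Hle v b) := by
  have h2 : μ Set.univ / 2 < μ Set.univ := ENNReal.half_lt_self hpos.ne' (measure_ne_top μ _)
  obtain ⟨n, hn⟩ := ((tendsto_Hle_atTop μ v).eventually_const_lt h2).exists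
  exact ⟨(n : ℝ), hn⟩

/-- continuity of c ↦ μ (Hle v c) as a real-valued function -/
lemma continuous_G
    (hvanish : ∀ v : E2, v ≠ 0 → ∀ c : ℝ, μ {x | (inner ℝ v x : ℝ) = c} = 0)
    {v : E2} (hv : v ≠ 0) :
    Continuous fun c : ℝ => (μ (Hle v c)).toReal := by
  rw [continuous_iff_seqContinuous]
  intro cn c hcn
  have := half_tendsto μ hvanish hv (tendsto_const_nhds : Tendsto (fun _ : ℕ => v) _ _) hcn
  exact (ENNReal.tendsto_toReal (measure_ne_top μ _)).comp this

lemma median_exists (hpos : 0 < μ Set.univ)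
    (hvanish : ∀ v : E2, v ≠ 0 → ∀ c : ℝ, μ {x | (inner ℝ v x : ℝ) = c} = 0) :
    ∀ v : E2, ∃ c : ℝ, v ≠ 0 → μ (Hle v c) = μ Set.univ / 2 := by
  intro v
  by_cases hv : v ≠ 0
  swap
  · exact ⟨0, fun h => absurd h hv⟩
  obtain ⟨a, ha⟩ := exists_lt_half μ hpos v
  obtain ⟨b, hb⟩ := exists_half_lt μ hpos v
  set G := fun c : ℝ => (μ (Hle v c)).toReal with hG
  have hmonoG : Monotone G := fun c c' h =>
    ENNReal.toReal_mono (measure_ne_top μ _) (measure_mono (Hle_mono v h))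
  have hhalf_ne : μ Set.univ / 2 ≠ ⊤ :=
    (lt_of_le_of_lt (ENNReal.half_le_self) (measure_lt_top μ _)).ne
  have ha' : G a < (μ Set.univ / 2).toReal :=
    ENNReal.toReal_lt_toReal (measure_ne_top μ _) hhalf_ne |>.mpr ha
  have hb' : (μ Set.univ / 2).toReal < G b :=
    ENNReal.toReal_lt_toReal hhalf_ne (measure_ne_top μ _) |>.mpr hb
  have hab : min a b ≤ max a b := min_le_max
  have hmem : (μ Set.univ / 2).toReal ∈ Set.Icc (G (min a b)) (G (max a b)) := by
    constructor
    · exact le_trans (hmonoG (min_le_left a b)) ha'.le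
    · exact le_trans hb'.le (hmonoG (le_max_right a b))
  obtain ⟨c, _, hc⟩ := intermediate_value_Icc hab ((continuous_G μ hvanish hv).continuousOn) hmem
  refine ⟨c, fun _ => ?_⟩
  exact (ENNReal.toReal_eq_toReal_iff' (measure_ne_top μ _) hhalf_ne).mp hc

/-- Median independence: intersecting with any measurable set. -/
lemma med_indep (v : E2)
    {c c' : ℝ} (hc : μ (Hle v c) = μ Set.univ / 2) (hc' : μ (Hle v c') = μ Set.univ / 2)
    {S : Set E2} (hS : MeasurableSet S) :
    μ (Hle v c ∩ S) = μ (Hle v c' ∩ S) := by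
  have key : ∀ d d' : ℝ, d ≤ d' → μ (Hle v d) = μ Set.univ / 2 →
      μ (Hle v d') = μ Set.univ / 2 → μ (Hle v d ∩ S) = μ (Hle v d' ∩ S) := by
    intro d d' hdd hd hd'
    have hsub : Hle v d ⊆ Hle v d' := Hle_mono v hdd
    have hdiff : μ (Hle v d' \ Hle v d) = 0 := by
      rw [measure_diff hsub (measurable_Hle v d).nullMeasurableSet (measure_ne_top μ _), hd, hd',
        tsub_self]
    have hset : Hle v d' ∩ S = (Hle v d ∩ S) ∪ ((Hle v d' \ Hle v d) ∩ S) := by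
      ext x
      by_cases hx : x ∈ Hle v d
      · simp [hx, hsub hx]
      · simp [hx]
    rw [hset]
    refine le_antisymm (measure_mono Set.subset_union_left) ?_
    calc μ ((Hle v d ∩ S) ∪ ((Hle v d' \ Hle v d) ∩ S))
        ≤ μ (Hle v d ∩ S) + μ ((Hle v d' \ Hle v d) ∩ S) := measure_union_le _ _
      _ ≤ μ (Hle v d ∩ S) + 0 := by
          gcongr
          exact le_trans (measure_mono Set.inter_subset_left) hdiff.le
      _ = μ (Hle v d ∩ S) := add_zero _
  rcases le_total c c' with h | h
  · exact key c c' h hc hc'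
  · exact (key c' c h hc' hc).symm

def vv (θ : ℝ) : E2 := (WithLp.equiv 2 (Fin 2 → ℝ)).symm ![Real.cos θ, Real.sin θ]

def ww (θ : ℝ) : E2 := (WithLp.equiv 2 (Fin 2 → ℝ)).symm ![-Real.sin θ, Real.cos θ]

lemma vv_apply (θ : ℝ) : vv θ 0 = Real.cos θ ∧ vv θ 1 = Real.sin θ := by
  constructor <;> simp [vv, PiLp.toLp_apply]

lemma vv_ne (θ : ℝ) : vv θ ≠ 0 := by
  intro h
  have h0 : vv θ 0 = 0 := by rw [h]; rfl
  have h1 : vv θ 1 = 0 := by rw [h]; rfl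
  rw [(vv_apply θ).1] at h0
  rw [(vv_apply θ).2] at h1
  have := Real.sin_sq_add_cos_sq θ
  rw [h0, h1] at this
  norm_num at this

lemma ww_apply (θ : ℝ) : ww θ 0 = -Real.sin θ ∧ ww θ 1 = Real.cos θ := by
  constructor <;> simp [ww, PiLp.toLp_apply]

lemma ww_ne (θ : ℝ) : ww θ ≠ 0 := by
  intro h
  have h0 : ww θ 0 = 0 := by rw [h]; rfl
  have h1 : ww θ 1 = 0 := by rw [h]; rfl
  rw [(ww_apply θ).1] at h0
  rw [(ww_apply θ).2] at h1
  have := Real.sin_sq_add_cos_sq θ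
  rw [h1, neg_eq_zero.mp h0] at this
  norm_num at this

lemma vv_rot (θ : ℝ) : vv (θ + Real.pi / 2) = ww θ := by
  unfold vv ww
  congr 1
  ext i
  fin_cases i <;> simp [Real.cos_add_pi_div_two, Real.sin_add_pi_div_two]

lemma ww_rot (θ : ℝ) : ww (θ + Real.pi / 2) = -vv θ := by
  have hneg : -vv θ = (WithLp.equiv 2 (Fin 2 → ℝ)).symm ![-Real.cos θ, -Real.sin θ] := by
    unfold vv
    rw [WithLp.equiv_symm_apply, ← WithLp.toLp_neg]
    congr 1
    ext i
    fin_cases i <;> simp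
  rw [hneg]
  unfold ww
  congr 1
  ext i
  fin_cases i <;> simp [Real.cos_add_pi_div_two, Real.sin_add_pi_div_two]

lemma vv_inner_ww (θ : ℝ) : (inner ℝ (vv θ) (ww θ) : ℝ) = 0 := by
  rw [PiLp.inner_apply, Fin.sum_univ_two]
  simp only [RCLike.inner_apply, conj_trivial]
  rw [(vv_apply θ).1, (vv_apply θ).2, (ww_apply θ).1, (ww_apply θ).2]
  ring

lemma continuous_vv : Continuous vv := by
  unfold vv
  refine (PiLp.continuous_toLp 2 _).comp ?_
  refine continuous_pi fun i => ?_
  fin_cases i <;> simp [Real.continuous_cos, Real.continuous_sin]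

lemma continuous_ww : Continuous ww := by
  unfold ww
  refine (PiLp.continuous_toLp 2 _).comp ?_
  refine continuous_pi fun i => ?_
  fin_cases i
  · simp; exact Real.continuous_sin.neg
  · simpa using Real.continuous_cos

lemma Hle_neg (v : E2) (c : ℝ) : Hle (-v) c = Hge v (-c) := by
  ext x
  simp only [Hle, Hge, Set.mem_setOf_eq, inner_neg_left]
  constructor <;> intro h <;> linarith

/-- medians along a convergent sequence of directions are eventually bounded -/
lemma med_bdd (hpos : 0 < μ Set.univ)
    (hvanish : ∀ v : E2, v ≠ 0 → ∀ c : ℝ, μ {x | (inner ℝ v x : ℝ) = c} = 0)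
    {v : E2} (hv : v ≠ 0) {vn : ℕ → E2} (hvn : Tendsto vn atTop (𝓝 v))
    {cn : ℕ → ℝ} (hcn : ∀ n, μ (Hle (vn n) (cn n)) = μ Set.univ / 2) :
    ∃ a b : ℝ, ∀ᶠ n in atTop, cn n ∈ Set.Icc a b := by
  obtain ⟨a, ha⟩ := exists_lt_half μ hpos v
  obtain ⟨b, hb⟩ := exists_half_lt μ hpos v
  refine ⟨a, b, ?_⟩
  have h1 := (half_tendsto μ hvanish hv hvn
    (tendsto_const_nhds (x := a))).eventually_lt_const ha
  have h2 := (half_tendsto μ hvanish hv hvn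
    (tendsto_const_nhds (x := b))).eventually_const_lt hb
  filter_upwards [h1, h2] with n hn1 hn2
  constructor
  · by_contra hcon
    push_neg at hcon
    have : μ (Hle (vn n) (cn n)) ≤ μ (Hle (vn n) a) := measure_mono (Hle_mono _ hcon.le)
    rw [hcn n] at this
    exact absurd (lt_of_le_of_lt this hn1) (lt_irrefl _)
  · by_contra hcon
    push_neg at hcon
    have : μ (Hle (vn n) b) ≤ μ (Hle (vn n) (cn n)) := measure_mono (Hle_mono _ hcon.le)
    rw [hcn n] at this
    exact absurd (lt_of_lt_of_le hn2 this) (lt_irrefl _)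

/-- the real-valued quadrant function -/
def Areal (m1 m2 : ℝ → ℝ) (θ : ℝ) : ℝ :=
  (μ (Hle (vv θ) (m1 θ) ∩ Hle (ww θ) (m2 θ))).toReal

set_option maxHeartbeats 1000000 in
lemma A_cont (hpos : 0 < μ Set.univ)
    (hvanish : ∀ v : E2, v ≠ 0 → ∀ c : ℝ, μ {x | (inner ℝ v x : ℝ) = c} = 0)
    (m1 m2 : ℝ → ℝ)
    (hm1 : ∀ θ, μ (Hle (vv θ) (m1 θ)) = μ Set.univ / 2)
    (hm2 : ∀ θ, μ (Hle (ww θ) (m2 θ)) = μ Set.univ / 2) :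
    Continuous (Areal μ m1 m2) := by
  rw [continuous_iff_seqContinuous]
  intro θn θ₀ hθn
  refine tendsto_of_subseq_tendsto fun ns hns => ?_
  set φ : ℕ → ℝ := fun n => θn (ns n) with hφdef
  have hφ : Tendsto φ atTop (𝓝 θ₀) := hθn.comp hns
  -- medians along φ are eventually bounded
  have hv1 : Tendsto (fun n => vv (φ n)) atTop (𝓝 (vv θ₀)) :=
    (continuous_vv.tendsto θ₀).comp hφ
  have hv2 : Tendsto (fun n => ww (φ n)) atTop (𝓝 (ww θ₀)) :=
    (continuous_ww.tendsto θ₀).comp hφ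
  obtain ⟨a1, b1, hbd1⟩ := med_bdd μ hpos hvanish (vv_ne θ₀) hv1 (fun n => hm1 (φ n))
  obtain ⟨a2, b2, hbd2⟩ := med_bdd μ hpos hvanish (ww_ne θ₀) hv2 (fun n => hm2 (φ n))
  obtain ⟨N, hN⟩ := (hbd1.and hbd2).exists_forall_of_atTop
  -- Bolzano–Weierstrass on the pair of medians
  set y : ℕ → ℝ × ℝ := fun n => (m1 (φ (n + N)), m2 (φ (n + N))) with hydef
  have hybdd : ∀ n, y n ∈ Set.Icc a1 b1 ×ˢ Set.Icc a2 b2 := by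
    intro n
    obtain ⟨h1, h2⟩ := hN (n + N) (Nat.le_add_left N n)
    exact ⟨h1, h2⟩
  obtain ⟨cd, -, ψ, hψ, hyψ⟩ := tendsto_subseq_of_bounded
    ((Metric.isBounded_Icc a1 b1).prod (Metric.isBounded_Icc a2 b2)) hybdd
  refine ⟨fun n => ψ n + N, ?_⟩
  set α : ℕ → ℝ := fun n => φ (ψ n + N) with hαdef
  have hmsTop : Tendsto (fun n => ψ n + N) atTop atTop :=
    tendsto_atTop_mono (fun n => Nat.le_add_right (ψ n) N) hψ.tendsto_atTop
  have hα : Tendsto α atTop (𝓝 θ₀) := hφ.comp hmsTop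
  have hc1 : Tendsto (fun n => m1 (α n)) atTop (𝓝 cd.1) :=
    (continuous_fst.tendsto cd).comp hyψ
  have hc2 : Tendsto (fun n => m2 (α n)) atTop (𝓝 cd.2) :=
    (continuous_snd.tendsto cd).comp hyψ
  have hvα : Tendsto (fun n => vv (α n)) atTop (𝓝 (vv θ₀)) :=
    (continuous_vv.tendsto θ₀).comp hα
  have hwα : Tendsto (fun n => ww (α n)) atTop (𝓝 (ww θ₀)) :=
    (continuous_ww.tendsto θ₀).comp hα
  -- cd.1 and cd.2 are medians for vv θ₀ and ww θ₀
  have hmed1 : μ (Hle (vv θ₀) cd.1) = μ Set.univ / 2 := by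
    have h := half_tendsto μ hvanish (vv_ne θ₀) hvα hc1
    have h' : Tendsto (fun n => μ (Hle (vv (α n)) (m1 (α n)))) atTop (𝓝 (μ Set.univ / 2)) := by
      simpa [hm1] using (tendsto_const_nhds : Tendsto (fun _ : ℕ => μ Set.univ / 2) atTop _)
    exact tendsto_nhds_unique h h'
  have hmed2 : μ (Hle (ww θ₀) cd.2) = μ Set.univ / 2 := by
    have h := half_tendsto μ hvanish (ww_ne θ₀) hwα hc2
    have h' : Tendsto (fun n => μ (Hle (ww (α n)) (m2 (α n)))) atTop (𝓝 (μ Set.univ / 2)) := by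
      simpa [hm2] using (tendsto_const_nhds : Tendsto (fun _ : ℕ => μ Set.univ / 2) atTop _)
    exact tendsto_nhds_unique h h'
  -- quadrant convergence
  have hquad := quad_tendsto μ hvanish (vv_ne θ₀) (ww_ne θ₀) hvα hwα hc1 hc2
  -- identify limit with A θ₀ using median independence
  have heq : μ (Hle (vv θ₀) cd.1 ∩ Hle (ww θ₀) cd.2)
      = μ (Hle (vv θ₀) (m1 θ₀) ∩ Hle (ww θ₀) (m2 θ₀)) := by
    rw [med_indep μ (vv θ₀) hmed1 (hm1 θ₀) (measurable_Hle _ _)]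
    rw [Set.inter_comm, med_indep μ (ww θ₀) hmed2 (hm2 θ₀) (measurable_Hle _ _), Set.inter_comm]
  rw [heq] at hquad
  exact (ENNReal.tendsto_toReal (measure_ne_top μ _)).comp hquad

lemma Hge_half {v : E2} (hv : v ≠ 0)
    (hvanish : ∀ v : E2, v ≠ 0 → ∀ c : ℝ, μ {x | (inner ℝ v x : ℝ) = c} = 0)
    {c : ℝ} (hc : μ (Hle v c) = μ Set.univ / 2) :
    μ (Hge v c) = μ Set.univ / 2 := by
  have := split μ v hv hvanish c MeasurableSet.univ
  rw [Set.inter_univ, Set.inter_univ, hc] at this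
  have h2 : μ Set.univ / 2 + μ (Hge v c) = μ Set.univ / 2 + μ Set.univ / 2 := by
    rw [this, ENNReal.add_halves]
  exact (ENNReal.add_right_inj (by
    exact (lt_of_le_of_lt ENNReal.half_le_self (measure_lt_top μ _)).ne)).mp h2

lemma Hle_half_of_Hge {v : E2} (hv : v ≠ 0)
    (hvanish : ∀ v : E2, v ≠ 0 → ∀ c : ℝ, μ {x | (inner ℝ v x : ℝ) = c} = 0)
    {c : ℝ} (hc : μ (Hge v c) = μ Set.univ / 2) :
    μ (Hle v c) = μ Set.univ / 2 := by
  have := split μ v hv hvanish c MeasurableSet.univ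
  rw [Set.inter_univ, Set.inter_univ, hc] at this
  have h2 : μ (Hle v c) + μ Set.univ / 2 = μ Set.univ / 2 + μ Set.univ / 2 := by
    rw [this, ENNReal.add_halves]
  have hne : μ Set.univ / 2 ≠ ⊤ :=
    (lt_of_le_of_lt ENNReal.half_le_self (measure_lt_top μ _)).ne
  rw [add_comm (μ (Hle v c))] at h2
  exact (ENNReal.add_right_inj hne).mp h2

lemma A_rot (hvanish : ∀ v : E2, v ≠ 0 → ∀ c : ℝ, μ {x | (inner ℝ v x : ℝ) = c} = 0)
    (m1 m2 : ℝ → ℝ)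
    (hm1 : ∀ θ, μ (Hle (vv θ) (m1 θ)) = μ Set.univ / 2)
    (hm2 : ∀ θ, μ (Hle (ww θ) (m2 θ)) = μ Set.univ / 2)
    (θ : ℝ) :
    Areal μ m1 m2 (θ + Real.pi / 2) = (μ Set.univ).toReal / 2 - Areal μ m1 m2 θ := by
  set u := vv θ
  set w := ww θ with hwdef
  have hu : u ≠ 0 := vv_ne θ
  have hw : w ≠ 0 := ww_ne θ
  have hm1' : μ (Hle w (m1 (θ + Real.pi / 2))) = μ Set.univ / 2 := by
    have := hm1 (θ + Real.pi / 2)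
    rwa [vv_rot] at this
  have hm2' : μ (Hge u (-(m2 (θ + Real.pi / 2)))) = μ Set.univ / 2 := by
    have := hm2 (θ + Real.pi / 2)
    rwa [ww_rot, Hle_neg] at this
  have hmed : μ (Hle u (-(m2 (θ + Real.pi / 2)))) = μ Set.univ / 2 :=
    Hle_half_of_Hge μ hu hvanish hm2'
  -- the rotated quadrant
  have hset : Hle (vv (θ + Real.pi / 2)) (m1 (θ + Real.pi / 2))
      ∩ Hle (ww (θ + Real.pi / 2)) (m2 (θ + Real.pi / 2))
      = Hge u (-(m2 (θ + Real.pi / 2))) ∩ Hle w (m1 (θ + Real.pi / 2)) := by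
    rw [vv_rot, ww_rot, Hle_neg, Set.inter_comm]
  have hsplit := split μ u hu hvanish (-(m2 (θ + Real.pi / 2)))
    (measurable_Hle w (m1 (θ + Real.pi / 2)))
  rw [hm1'] at hsplit
  -- identify the lower part with the original quadrant
  have hlow : μ (Hle u (-(m2 (θ + Real.pi / 2))) ∩ Hle w (m1 (θ + Real.pi / 2)))
      = μ (Hle u (m1 θ) ∩ Hle w (m2 θ)) := by
    rw [med_indep μ u hmed (hm1 θ) (measurable_Hle _ _)]
    rw [Set.inter_comm, med_indep μ w hm1' (hm2 θ) (measurable_Hle _ _), Set.inter_comm]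
  rw [hlow] at hsplit
  -- convert to reals
  have hfin1 : μ (Hle u (m1 θ) ∩ Hle w (m2 θ)) ≠ ⊤ := measure_ne_top μ _
  have hfin2 : μ (Hge u (-(m2 (θ + Real.pi / 2))) ∩ Hle w (m1 (θ + Real.pi / 2))) ≠ ⊤ :=
    measure_ne_top μ _
  have := congrArg ENNReal.toReal hsplit
  rw [ENNReal.toReal_add hfin1 hfin2, ENNReal.toReal_div] at this
  unfold Areal
  rw [hset]
  simp only [ENNReal.toReal_ofNat] at this ⊢
  linarith [this]
end

end Pancake

open Pancake in
theorem pancake_theorem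
    (μ : Measure (EuclideanSpace ℝ (Fin 2))) [IsFiniteMeasure μ]
    (hpos : 0 < μ Set.univ)
    (hvanish : ∀ v : EuclideanSpace ℝ (Fin 2), v ≠ 0 → ∀ c : ℝ,
      μ {x | (inner ℝ v x : ℝ) = c} = 0) :
    ∃ (v w : EuclideanSpace ℝ (Fin 2)) (c₁ c₂ : ℝ), v ≠ 0 ∧ w ≠ 0 ∧
      (inner ℝ v w : ℝ) = 0 ∧
      μ {x | (inner ℝ v x : ℝ) ≤ c₁ ∧ (inner ℝ w x : ℝ) ≤ c₂} = μ Set.univ / 4 ∧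
      μ {x | (inner ℝ v x : ℝ) ≤ c₁ ∧ c₂ ≤ (inner ℝ w x : ℝ)} = μ Set.univ / 4 ∧
      μ {x | c₁ ≤ (inner ℝ v x : ℝ) ∧ (inner ℝ w x : ℝ) ≤ c₂} = μ Set.univ / 4 ∧
      μ {x | c₁ ≤ (inner ℝ v x : ℝ) ∧ c₂ ≤ (inner ℝ w x : ℝ)} = μ Set.univ / 4 := by
  classical
  choose m hm using median_exists μ hpos hvanish
  set m1 : ℝ → ℝ := fun θ => m (vv θ) with hm1def
  set m2 : ℝ → ℝ := fun θ => m (ww θ) with hm2def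
  have hm1 : ∀ θ, μ (Hle (vv θ) (m1 θ)) = μ Set.univ / 2 := fun θ => hm (vv θ) (vv_ne θ)
  have hm2 : ∀ θ, μ (Hle (ww θ) (m2 θ)) = μ Set.univ / 2 := fun θ => hm (ww θ) (ww_ne θ)
  set T : ℝ := (μ Set.univ).toReal with hT
  set A : ℝ → ℝ := Areal μ m1 m2 with hA
  have hAcont : Continuous A := A_cont μ hpos hvanish m1 m2 hm1 hm2
  have hArot : ∀ θ, A (θ + Real.pi / 2) = T / 2 - A θ := A_rot μ hvanish m1 m2 hm1 hm2
  -- find θ with A θ = T/4 by IVT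
  have hsum : A (0 + Real.pi / 2) - T / 4 = -(A 0 - T / 4) := by
    rw [hArot 0]; ring
  have hle : (0 : ℝ) ≤ 0 + Real.pi / 2 := by positivity
  have hθ : ∃ θ, A θ = T / 4 := by
    set g : ℝ → ℝ := fun θ => A θ - T / 4 with hg
    rcases le_total (g 0) 0 with hcase | hcase
    · have hmem : (0 : ℝ) ∈ Set.Icc (g 0) (g (0 + Real.pi / 2)) := by
        constructor
        · exact hcase
        · show (0:ℝ) ≤ A (0 + Real.pi / 2) - T / 4
          rw [hsum]; simp only [hg] at hcase; linarith
      obtain ⟨θ, _, hθ0⟩ := intermediate_value_Icc hle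
        ((hAcont.sub continuous_const).continuousOn) hmem
      exact ⟨θ, by linarith [hθ0, sub_eq_zero.mp hθ0]⟩
    · have hmem : (0 : ℝ) ∈ Set.Icc (g (0 + Real.pi / 2)) (g 0) := by
        constructor
        · show A (0 + Real.pi / 2) - T / 4 ≤ 0
          rw [hsum]; simp only [hg] at hcase; linarith
        · exact hcase
      obtain ⟨θ, _, hθ0⟩ := intermediate_value_Icc' hle
        ((hAcont.sub continuous_const).continuousOn) hmem
      exact ⟨θ, by linarith [sub_eq_zero.mp hθ0]⟩
  obtain ⟨θ, hθ4⟩ := hθ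
  set v := vv θ with hvdef
  set w := ww θ with hwdef
  have hv : v ≠ 0 := vv_ne θ
  have hw : w ≠ 0 := ww_ne θ
  set c₁ : ℝ := m1 θ with hc1def
  set c₂ : ℝ := m2 θ with hc2def
  -- the four quadrant measures
  have hq4ne : μ Set.univ / 4 ≠ ⊤ := (ENNReal.div_lt_top (measure_ne_top μ _) (by norm_num)).ne
  have hq2ne : μ Set.univ / 2 ≠ ⊤ := (ENNReal.div_lt_top (measure_ne_top μ _) (by norm_num)).ne
  have hq : μ Set.univ / 4 + μ Set.univ / 4 = μ Set.univ / 2 := by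
    refine (ENNReal.toReal_eq_toReal_iff' (ENNReal.add_ne_top.mpr ⟨hq4ne, hq4ne⟩) hq2ne).mp ?_
    rw [ENNReal.toReal_add hq4ne hq4ne, ENNReal.toReal_div, ENNReal.toReal_div]
    simp only [ENNReal.toReal_ofNat]
    ring
  have cancel : ∀ {a b : ENNReal}, a + b = μ Set.univ / 2 → a = μ Set.univ / 4 →
      b = μ Set.univ / 4 := by
    intro a b hab ha
    rw [ha, ← hq] at hab
    exact (ENNReal.add_right_inj hq4ne).mp hab
  have hQ1 : μ (Hle v c₁ ∩ Hle w c₂) = μ Set.univ / 4 := by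
    refine (ENNReal.toReal_eq_toReal_iff' (measure_ne_top μ _) hq4ne).mp ?_
    have : (μ (Hle v c₁ ∩ Hle w c₂)).toReal = T / 4 := hθ4
    rw [this, ENNReal.toReal_div]
    simp only [ENNReal.toReal_ofNat]
    rfl
  have h13 := split μ v hv hvanish c₁ (measurable_Hle w c₂)
  rw [hm2 θ] at h13
  have hQ3 : μ (Hge v c₁ ∩ Hle w c₂) = μ Set.univ / 4 := cancel h13 hQ1
  have h12 := split μ w hw hvanish c₂ (measurable_Hle v c₁)
  rw [hm1 θ] at h12
  have hQ1' : μ (Hle w c₂ ∩ Hle v c₁) = μ Set.univ / 4 := by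
    rw [Set.inter_comm]; exact hQ1
  have hQ2 : μ (Hle v c₁ ∩ Hge w c₂) = μ Set.univ / 4 := by
    rw [Set.inter_comm]; exact cancel h12 hQ1'
  have h34 := split μ w hw hvanish c₂ (measurable_Hge v c₁)
  rw [Hge_half μ hv hvanish (hm1 θ)] at h34
  have hQ3' : μ (Hle w c₂ ∩ Hge v c₁) = μ Set.univ / 4 := by
    rw [Set.inter_comm]; exact hQ3
  have hQ4 : μ (Hge v c₁ ∩ Hge w c₂) = μ Set.univ / 4 := by
    rw [Set.inter_comm]; exact cancel h34 hQ3'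
  exact ⟨v, w, c₁, c₂, hv, hw, vv_inner_ww θ, hQ1, hQ2, hQ3, hQ4⟩
end
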